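/- For every A = (λ₁, λ₂, λ₃, a, b, c) ∈ J₃(𝕆), the determinant det(M_A) equals the determinant (over ℂ, on the 8-dimensional space 𝕆) of the ℂ-linear endomorphism (det_𝕆(A) − 2·Re(c·(a·b)))·id + L_a∘L_b∘L_c + L_c̄∘L_b̄∘L_ā of 𝕆. -/

import Mathlib

noncomputable section

open scoped Quaternion

/-- The complexified quaternions. -/
abbrev Hq : Type := Quaternion ℂ

theorem q_mul_smul (t : ℂ) (a b : Hq) : a * (t • b) = t • (a * b) := by
  rw [← Quaternion.coe_mul_eq_smul, ← Quaternion.coe_mul_eq_smul, ← mul_assoc,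
    ← Quaternion.coe_commutes, mul_assoc]

theorem q_smul_mul (t : ℂ) (a b : Hq) : (t • a) * b = t • (a * b) := by
  rw [← Quaternion.coe_mul_eq_smul, ← Quaternion.coe_mul_eq_smul, mul_assoc]

/-- The complexified octonions, via the Cayley–Dickson construction. -/
abbrev Oct : Type := Hq × Hq

namespace Oct

/-- Octonion multiplication (Cayley–Dickson construction). -/
def omul (x y : Oct) : Oct := (x.1 * y.1 - star y.2 * x.2, y.2 * x.1 + x.2 * star y.1)

/-- Octonion conjugation. -/
def oconj (x : Oct) : Oct := (star x.1, -x.2)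

/-- The unit octonion. -/
def oone : Oct := (1, 0)

/-- Real part of an octonion: the unique scalar with `x + oconj x = (2 * oRe x) • oone`. -/
def oRe (x : Oct) : ℂ := x.1.re

/-- Squared norm of an octonion: the unique scalar with `omul x (oconj x) = onormSq x • oone`. -/
def onormSq (x : Oct) : ℂ := Quaternion.normSq x.1 + Quaternion.normSq x.2

theorem omul_add (z x y : Oct) : omul z (x + y) = omul z x + omul z y := by
  have hs : ∀ p q : Hq, star (p + q) = star p + star q := fun p q => star_add p q
  simp only [omul, Prod.fst_add, Prod.snd_add, star_add, hs, mul_add, add_mul, Prod.mk_add_mk,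
    Prod.mk.injEq]
  constructor <;> abel

theorem add_omul (x y z : Oct) : omul (x + y) z = omul x z + omul y z := by
  simp only [omul, Prod.fst_add, Prod.snd_add, star_add, mul_add, add_mul, Prod.mk_add_mk,
    Prod.mk.injEq]
  constructor <;> abel

theorem omul_smul (t : ℂ) (z x : Oct) : omul z (t • x) = t • omul z x := by
  simp only [omul, Prod.smul_fst, Prod.smul_snd, Quaternion.star_smul, q_smul_mul,
    q_mul_smul, Prod.smul_mk, smul_sub, smul_add]

theorem smul_omul (t : ℂ) (x z : Oct) : omul (t • x) z = t • omul x z := by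
  simp only [omul, Prod.smul_fst, Prod.smul_snd, Quaternion.star_smul, q_smul_mul,
    q_mul_smul, Prod.smul_mk, smul_sub, smul_add]

/-- Left multiplication `L_z` as a `ℂ`-linear endomorphism of the octonions. -/
def Lmul (z : Oct) : Oct →ₗ[ℂ] Oct where
  toFun x := omul z x
  map_add' x y := omul_add z x y
  map_smul' t x := omul_smul t z x

/-- Right multiplication `R_z` as a `ℂ`-linear endomorphism of the octonions. -/
def Rmul (z : Oct) : Oct →ₗ[ℂ] Oct where
  toFun x := omul x z
  map_add' x y := add_omul x y z
  map_smul' t x := smul_omul t x z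

end Oct

namespace Oct

/-- The octonionic determinant of the hermitian matrix
`[[λ₁, c, b̄], [c̄, λ₂, a], [b, ā, λ₃]]`. -/
def detO (l1 l2 l3 : ℂ) (a b c : Oct) : ℂ :=
  l1 * l2 * l3 + 2 * oRe (omul c (omul a b)) - l1 * onormSq a - l2 * onormSq b - l3 * onormSq c

/-- The associator `[c,b,a] = (c·b)·a − c·(b·a)`. -/
def assoc (c b a : Oct) : Oct := omul (omul c b) a - omul c (omul b a)

/-- `φ(c,b,a) = (1/2)·Re((c·b̄ − b̄·c)·a)`. -/
def phi (c b a : Oct) : ℂ := (1 / 2) * oRe (omul (omul c (oconj b) - omul (oconj b) c) a)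

/-- The Ogievetskiî–Dray–Manogue sextic. -/
def SODM (l1 l2 l3 : ℂ) (a b c : Oct) : ℂ :=
  detO l1 l2 l3 a b c ^ 2 - 4 * phi c b a * detO l1 l2 l3 a b c - onormSq (assoc c b a)

/-- The Cartan cubic `C'` of the hermitian matrix `[[λ₁, c̄, ā], [c, λ₂, b], [a, b̄, λ₃]]`. -/
def cartan' (l1 l2 l3 : ℂ) (a b c : Oct) : ℂ :=
  detO l1 l2 l3 a b c - 2 * oRe (omul c (omul a b)) + 2 * oRe (omul (oconj c) (omul b a))

/-- The sextic `𝔖`. -/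
def frakS (l1 l2 l3 : ℂ) (a b c : Oct) : ℂ :=
  (l1 * onormSq a + l2 * onormSq b + l3 * onormSq c - l1 * l2 * l3) ^ 2
    - 4 * (l1 * onormSq a + l2 * onormSq b + l3 * onormSq c - l1 * l2 * l3)
        * oRe c * oRe (omul a b)
    + 4 * (onormSq b * onormSq a * oRe c ^ 2 + onormSq c * oRe (omul a b) ^ 2
        - onormSq a * onormSq b * onormSq c)

/-- The endomorphism `M_A` of `𝕆³` attached to
`A = [[λ₁, c, b̄], [c̄, λ₂, a], [b, ā, λ₃]] ∈ J₃(𝕆)`. -/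
def MA (l1 l2 l3 : ℂ) (a b c : Oct) : Oct × Oct × Oct →ₗ[ℂ] Oct × Oct × Oct where
  toFun p := (l1 • p.1 + omul c p.2.1 + omul (oconj b) p.2.2,
              omul (oconj c) p.1 + l2 • p.2.1 + omul a p.2.2,
              omul b p.1 + omul (oconj a) p.2.1 + l3 • p.2.2)
  map_add' p q := by
    simp only [Prod.fst_add, Prod.snd_add, omul_add, smul_add, Prod.mk_add_mk, Prod.mk.injEq]
    refine ⟨?_, ?_, ?_⟩ <;> abel
  map_smul' t p := by
    simp only [Prod.smul_fst, Prod.smul_snd, omul_smul, smul_comm t, Prod.smul_mk, smul_add,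
      RingHom.id_apply]

/-- The endomorphism `N_A` of `𝕆³` of the twisted octonionic eigenvalue problem. -/
def NA (l1 l2 l3 : ℂ) (a b c : Oct) : Oct × Oct × Oct →ₗ[ℂ] Oct × Oct × Oct where
  toFun p := (l1 • p.1 + omul p.2.1 c + omul (oconj b) p.2.2,
              omul p.1 (oconj c) + l2 • p.2.1 + omul a p.2.2,
              omul b p.1 + omul (oconj a) p.2.1 + l3 • p.2.2)
  map_add' p q := by
    simp only [Prod.fst_add, Prod.snd_add, omul_add, add_omul, smul_add, Prod.mk_add_mk,
      Prod.mk.injEq]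
    refine ⟨?_, ?_, ?_⟩ <;> abel
  map_smul' t p := by
    simp only [Prod.smul_fst, Prod.smul_snd, omul_smul, smul_omul, smul_comm t, Prod.smul_mk,
      smul_add, RingHom.id_apply]

/-- The exceptional Jordan algebra `J₃(𝕆)`, as the 27-dimensional space of tuples
`(λ₁, λ₂, λ₃, a, b, c)`. -/
abbrev J3 : Type := ℂ × ℂ × ℂ × Oct × Oct × Oct

def MAj (A : J3) : Oct × Oct × Oct →ₗ[ℂ] Oct × Oct × Oct :=
  MA A.1 A.2.1 A.2.2.1 A.2.2.2.1 A.2.2.2.2.1 A.2.2.2.2.2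

def NAj (A : J3) : Oct × Oct × Oct →ₗ[ℂ] Oct × Oct × Oct :=
  NA A.1 A.2.1 A.2.2.1 A.2.2.2.1 A.2.2.2.2.1 A.2.2.2.2.2

def SODMj (A : J3) : ℂ := SODM A.1 A.2.1 A.2.2.1 A.2.2.2.1 A.2.2.2.2.1 A.2.2.2.2.2

def cartan'j (A : J3) : ℂ := cartan' A.1 A.2.1 A.2.2.1 A.2.2.2.1 A.2.2.2.2.1 A.2.2.2.2.2

def frakSj (A : J3) : ℂ := frakS A.1 A.2.1 A.2.2.1 A.2.2.2.1 A.2.2.2.2.1 A.2.2.2.2.2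

/-- A twisted triality pair: a pair of `ℂ`-linear norm-preserving bijections of `𝕆` with
`T₁(x)·T₂(y) = T₁(x·y)` for all `x, y`. -/
def TwistedPair (T1 T2 : Oct →ₗ[ℂ] Oct) : Prop :=
  Function.Bijective T1 ∧ Function.Bijective T2 ∧
    (∀ x, onormSq (T1 x) = onormSq x) ∧ (∀ x, onormSq (T2 x) = onormSq x) ∧
    ∀ x y, omul (T1 x) (T2 y) = T1 (omul x y)

/-- `K(x) = conj (T₁ x̄)`. -/
def Kmap (T1 : Oct →ₗ[ℂ] Oct) (x : Oct) : Oct := oconj (T1 (oconj x))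

/-- The twisted `Spin₇`-action on `J₃(𝕆)`:
`(T₁,T₂)·(λ₁, λ₂, λ₃, a, b, c) = (λ₁, λ₂, λ₃, T₁(a), K(b), T₂(c))`. -/
def spinAct (T1 T2 : Oct →ₗ[ℂ] Oct) (A : J3) : J3 :=
  (A.1, A.2.1, A.2.2.1, T1 A.2.2.2.1, Kmap T1 A.2.2.2.2.1, T2 A.2.2.2.2.2)

/-- The hermitian matrix `[[λ₁, c, b̄], [c̄, λ₂, a], [b, ā, λ₃]]` attached to `A ∈ J₃(𝕆)`,
with complex scalars embedded as multiples of the unit octonion. -/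
def toMat (A : J3) : Matrix (Fin 3) (Fin 3) Oct :=
  !![A.1 • oone, A.2.2.2.2.2, oconj A.2.2.2.2.1;
     oconj A.2.2.2.2.2, A.2.1 • oone, A.2.2.2.1;
     A.2.2.2.2.1, oconj A.2.2.2.1, A.2.2.1 • oone]

/-- The action of a (special linear) complex `3×3` matrix `C` on `J₃(𝕆)`, sending the hermitian
matrix `M` of `A` to `Cᵀ · M · C` (the entries of `C` being central scalars). -/
def slAct (C : Matrix (Fin 3) (Fin 3) ℂ) (A : J3) : J3 :=
  let M : Matrix (Fin 3) (Fin 3) Oct :=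
    Matrix.of fun i j => ∑ k, ∑ l, (C k i * C l j) • toMat A k l
  (oRe (M 0 0), oRe (M 1 1), oRe (M 2 2), M 1 2, M 2 0, M 0 1)

/-- The coordinates of `A ∈ J₃(𝕆)` in the fixed standard `ℂ`-basis of `ℂ³ × 𝕆³`. -/
def coords (A : J3) : Fin 27 → ℂ :=
  ![A.1, A.2.1, A.2.2.1,
    A.2.2.2.1.1.re, A.2.2.2.1.1.imI, A.2.2.2.1.1.imJ, A.2.2.2.1.1.imK,
    A.2.2.2.1.2.re, A.2.2.2.1.2.imI, A.2.2.2.1.2.imJ, A.2.2.2.1.2.imK,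
    A.2.2.2.2.1.1.re, A.2.2.2.2.1.1.imI, A.2.2.2.2.1.1.imJ, A.2.2.2.2.1.1.imK,
    A.2.2.2.2.1.2.re, A.2.2.2.2.1.2.imI, A.2.2.2.2.1.2.imJ, A.2.2.2.2.1.2.imK,
    A.2.2.2.2.2.1.re, A.2.2.2.2.2.1.imI, A.2.2.2.2.2.1.imJ, A.2.2.2.2.2.1.imK,
    A.2.2.2.2.2.2.re, A.2.2.2.2.2.2.imI, A.2.2.2.2.2.2.imJ, A.2.2.2.2.2.2.imK]

end Oct


namespace Oct

noncomputable def bH : Module.Basis (Fin 4) ℂ Hq := QuaternionAlgebra.basisOneIJK _ _ _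
noncomputable def bO : Module.Basis (Fin 4 ⊕ Fin 4) ℂ Oct := bH.prod bH

theorem finrank_oct : Module.finrank ℂ Oct = 8 := by
  simp [Module.finrank_prod, Quaternion.finrank_eq_four]

section Shear
variable {M N : Type*} [AddCommGroup M] [Module ℂ M] [AddCommGroup N] [Module ℂ N]
variable {ι κ : Type*} [Fintype ι] [Fintype κ] [DecidableEq ι] [DecidableEq κ]

/-- lower shear `(x, y) ↦ (x, g x + y)`. -/
def shearL (g : M →ₗ[ℂ] N) : M × N →ₗ[ℂ] M × N :=
  (LinearMap.fst ℂ M N).prod (g ∘ₗ LinearMap.fst ℂ M N + LinearMap.snd ℂ M N)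

/-- upper shear `(x, y) ↦ (x + g y, y)`. -/
def shearU (g : N →ₗ[ℂ] M) : M × N →ₗ[ℂ] M × N :=
  (LinearMap.fst ℂ M N + g ∘ₗ LinearMap.snd ℂ M N).prod (LinearMap.snd ℂ M N)

theorem det_shearL (v : Module.Basis ι ℂ M) (w : Module.Basis κ ℂ N) (g : M →ₗ[ℂ] N) :
    LinearMap.det (shearL g) = 1 := by
  rw [← LinearMap.det_toMatrix (v.prod w)]
  have h : LinearMap.toMatrix (v.prod w) (v.prod w) (shearL g) =
      Matrix.fromBlocks 1 0 (LinearMap.toMatrix v w g) 1 := by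
    ext (i | i) (j | j) <;>
      simp [LinearMap.toMatrix_apply, shearL, Matrix.fromBlocks, Matrix.one_apply, Finsupp.single_apply, eq_comm]
  rw [h, Matrix.det_fromBlocks_zero₁₂, Matrix.det_one, Matrix.det_one, one_mul]

theorem det_shearU (v : Module.Basis ι ℂ M) (w : Module.Basis κ ℂ N) (g : N →ₗ[ℂ] M) :
    LinearMap.det (shearU g) = 1 := by
  rw [← LinearMap.det_toMatrix (v.prod w)]
  have h : LinearMap.toMatrix (v.prod w) (v.prod w) (shearU g) =
      Matrix.fromBlocks 1 (LinearMap.toMatrix w v g) 0 1 := by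
    ext (i | i) (j | j) <;>
      simp [LinearMap.toMatrix_apply, shearU, Matrix.fromBlocks, Matrix.one_apply, Finsupp.single_apply, eq_comm]
  rw [h, Matrix.det_fromBlocks_zero₂₁, Matrix.det_one, Matrix.det_one, one_mul]

theorem det_prodMap (v : Module.Basis ι ℂ M) (w : Module.Basis κ ℂ N) (f : M →ₗ[ℂ] M) (g : N →ₗ[ℂ] N) :
    LinearMap.det (f.prodMap g) = LinearMap.det f * LinearMap.det g := by
  rw [← LinearMap.det_toMatrix (v.prod w), LinearMap.toMatrix_prodMap v w f g,
    Matrix.det_fromBlocks_zero₂₁, LinearMap.det_toMatrix, LinearMap.det_toMatrix]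

end Shear
end Oct

namespace Oct

set_option maxHeartbeats 1000000 in
theorem oconj_omul_omul (c x : Oct) : omul (oconj c) (omul c x) = onormSq c • x := by
  obtain ⟨p, q⟩ := c; obtain ⟨u, v⟩ := x
  simp only [omul, oconj, onormSq, Prod.smul_mk, Prod.mk.injEq]
  constructor <;>
  · ext <;>
    simp only [Quaternion.normSq_def', Quaternion.re_mul, Quaternion.imI_mul,
      Quaternion.imJ_mul, Quaternion.imK_mul, Quaternion.re_star, Quaternion.imI_star,
      Quaternion.imJ_star, Quaternion.imK_star, Quaternion.re_sub, Quaternion.imI_sub,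
      Quaternion.imJ_sub, Quaternion.imK_sub, Quaternion.re_add, Quaternion.imI_add,
      Quaternion.imJ_add, Quaternion.imK_add, Quaternion.re_neg, Quaternion.imI_neg,
      Quaternion.imJ_neg, Quaternion.imK_neg, Quaternion.re_smul, Quaternion.imI_smul,
      Quaternion.imJ_smul, Quaternion.imK_smul, smul_eq_mul] <;>
    ring

set_option maxHeartbeats 1000000 in
theorem omul_oconj_omul (c x : Oct) : omul c (omul (oconj c) x) = onormSq c • x := by
  obtain ⟨p, q⟩ := c; obtain ⟨u, v⟩ := x
  simp only [omul, oconj, onormSq, Prod.smul_mk, Prod.mk.injEq]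
  constructor <;>
  · ext <;>
    simp only [Quaternion.normSq_def', Quaternion.re_mul, Quaternion.imI_mul,
      Quaternion.imJ_mul, Quaternion.imK_mul, Quaternion.re_star, Quaternion.imI_star,
      Quaternion.imJ_star, Quaternion.imK_star, Quaternion.re_sub, Quaternion.imI_sub,
      Quaternion.imJ_sub, Quaternion.imK_sub, Quaternion.re_add, Quaternion.imI_add,
      Quaternion.imJ_add, Quaternion.imK_add, Quaternion.re_neg, Quaternion.imI_neg,
      Quaternion.imJ_neg, Quaternion.imK_neg, Quaternion.re_smul, Quaternion.imI_smul,
      Quaternion.imJ_smul, Quaternion.imK_smul, smul_eq_mul] <;>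
    ring

theorem omul_neg (z x : Oct) : omul z (-x) = - omul z x := by
  rw [← neg_one_smul ℂ x, omul_smul]; exact neg_one_smul ℂ (omul z x)

theorem neg_omul (x z : Oct) : omul (-x) z = - omul x z := by
  rw [← neg_one_smul ℂ x, smul_omul]; exact neg_one_smul ℂ (omul x z)

/-- The 8-dimensional operator appearing as the Schur complement. -/
def Wop (l1 l2 l3 : ℂ) (a b c : Oct) : Oct →ₗ[ℂ] Oct :=
  (l1 * l2 * l3 - l1 * onormSq a - l2 * onormSq b - l3 * onormSq c) • LinearMap.id
    + Lmul (oconj a) ∘ₗ Lmul (oconj c) ∘ₗ Lmul (oconj b)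
    + Lmul b ∘ₗ Lmul c ∘ₗ Lmul a

def A12 (l1 : ℂ) (a b c : Oct) : Oct →ₗ[ℂ] Oct :=
  Lmul a - l1⁻¹ • (Lmul (oconj c) ∘ₗ Lmul (oconj b))

def A21 (l1 : ℂ) (a b c : Oct) : Oct →ₗ[ℂ] Oct :=
  Lmul (oconj a) - l1⁻¹ • (Lmul b ∘ₗ Lmul c)

def Smap (l1 l2 l3 : ℂ) (a b c : Oct) : Oct × Oct →ₗ[ℂ] Oct × Oct :=
  ((l2 - l1⁻¹ * onormSq c) • LinearMap.fst ℂ Oct Oct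
      + A12 l1 a b c ∘ₗ LinearMap.snd ℂ Oct Oct).prod
    (A21 l1 a b c ∘ₗ LinearMap.fst ℂ Oct Oct
      + (l3 - l1⁻¹ * onormSq b) • LinearMap.snd ℂ Oct Oct)

set_option maxHeartbeats 2000000 in
theorem key1 (l1 l2 l3 : ℂ) (a b c : Oct) (h1 : l1 ≠ 0) :
    shearL (((-l1⁻¹) • Lmul (oconj c)).prod ((-l1⁻¹) • Lmul b))
        ∘ₗ MA l1 l2 l3 a b c
        ∘ₗ shearU ((-l1⁻¹) • (Lmul c ∘ₗ LinearMap.fst ℂ Oct Oct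
            + Lmul (oconj b) ∘ₗ LinearMap.snd ℂ Oct Oct)) =
      ((l1 • LinearMap.id : Oct →ₗ[ℂ] Oct)).prodMap (Smap l1 l2 l3 a b c) := by
  refine LinearMap.ext fun p => ?_
  obtain ⟨x, y, z⟩ := p
  simp only [shearL, shearU, MA, Smap, A12, A21, Lmul, LinearMap.coe_comp, LinearMap.coe_mk,
    AddHom.coe_mk, Function.comp_apply, LinearMap.prod_apply, Function.prod, LinearMap.add_apply,
    LinearMap.smul_apply, LinearMap.fst_apply, LinearMap.snd_apply, LinearMap.prodMap_apply,
    LinearMap.id_coe, id_eq, LinearMap.neg_apply, LinearMap.sub_apply,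
    omul_add, omul_smul, oconj_omul_omul, omul_oconj_omul, Prod.mk.injEq,
    smul_add, smul_smul, neg_smul, smul_neg, Prod.smul_mk, omul_neg, neg_omul,
    Prod.mk_add_mk, Prod.neg_mk]
  refine ⟨?_, ?_, ?_⟩ <;> match_scalars <;> (first | ring1 | (field_simp; try ring1))
end Oct

namespace Oct

theorem omul_sub (z x y : Oct) : omul z (x - y) = omul z x - omul z y := by
  rw [sub_eq_add_neg, omul_add, omul_neg, sub_eq_add_neg]

theorem sub_omul (x y z : Oct) : omul (x - y) z = omul x z - omul y z := by
  rw [sub_eq_add_neg, add_omul, neg_omul, sub_eq_add_neg]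

def Tmap (l1 l2 l3 : ℂ) (a b c : Oct) : Oct →ₗ[ℂ] Oct :=
  (l3 - l1⁻¹ * onormSq b
      - (l2 - l1⁻¹ * onormSq c)⁻¹ * (onormSq a + l1⁻¹ * l1⁻¹ * (onormSq b * onormSq c)))
      • (LinearMap.id : Oct →ₗ[ℂ] Oct)
    + ((l2 - l1⁻¹ * onormSq c)⁻¹ * l1⁻¹) •
        (Lmul (oconj a) ∘ₗ Lmul (oconj c) ∘ₗ Lmul (oconj b) + Lmul b ∘ₗ Lmul c ∘ₗ Lmul a)

set_option maxHeartbeats 2000000 in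
theorem key2 (l1 l2 l3 : ℂ) (a b c : Oct) (h1 : l1 ≠ 0)
    (hμ : l2 - l1⁻¹ * onormSq c ≠ 0) :
    shearL ((-(l2 - l1⁻¹ * onormSq c)⁻¹) • A21 l1 a b c)
        ∘ₗ Smap l1 l2 l3 a b c
        ∘ₗ shearU ((-(l2 - l1⁻¹ * onormSq c)⁻¹) • A12 l1 a b c) =
      (((l2 - l1⁻¹ * onormSq c) • LinearMap.id : Oct →ₗ[ℂ] Oct)).prodMap
        (Tmap l1 l2 l3 a b c) := by
  refine LinearMap.ext fun p => ?_
  obtain ⟨y, z⟩ := p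
  simp only [shearL, shearU, Smap, A12, A21, Tmap, Lmul, LinearMap.coe_comp, LinearMap.coe_mk,
    AddHom.coe_mk, Function.comp_apply, LinearMap.prod_apply, Function.prod, LinearMap.add_apply,
    LinearMap.smul_apply, LinearMap.fst_apply, LinearMap.snd_apply, LinearMap.prodMap_apply,
    LinearMap.id_coe, id_eq, LinearMap.neg_apply, LinearMap.sub_apply,
    omul_add, omul_smul, oconj_omul_omul, omul_oconj_omul, Prod.mk.injEq,
    smul_add, smul_smul, neg_smul, smul_neg, Prod.smul_mk, omul_neg, neg_omul,
    omul_sub, sub_omul, Prod.mk_add_mk, Prod.neg_mk]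
  have hμ2 : l2 * l1 - onormSq c ≠ 0 := by
    intro h; apply hμ; field_simp; linear_combination h
  refine ⟨?_, ?_⟩ <;> match_scalars <;> (first | ring1 | (field_simp; try ring1))


set_option maxHeartbeats 1000000 in
theorem key3 (l1 l2 l3 : ℂ) (a b c : Oct) (h1 : l1 ≠ 0)
    (hμ : l2 - l1⁻¹ * onormSq c ≠ 0) :
    (l1 * (l2 - l1⁻¹ * onormSq c)) • Tmap l1 l2 l3 a b c = Wop l1 l2 l3 a b c := by
  have hμ2 : l2 * l1 - onormSq c ≠ 0 := by
    intro h; apply hμ; field_simp; linear_combination h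
  have hμ3 : l1 * l2 - onormSq c ≠ 0 := by rw [mul_comm]; exact hμ2
  refine LinearMap.ext fun x => ?_
  simp only [Tmap, Wop, Lmul, LinearMap.coe_comp, LinearMap.coe_mk, AddHom.coe_mk,
    Function.comp_apply, LinearMap.add_apply, LinearMap.smul_apply, LinearMap.id_coe, id_eq,
    smul_add, smul_smul]
  match_scalars <;> (first | ring1 | (field_simp; try ring1))

theorem det_MA_core (l1 l2 l3 : ℂ) (a b c : Oct) (h1 : l1 ≠ 0)
    (hμ : l2 - l1⁻¹ * onormSq c ≠ 0) :
    LinearMap.det (MA l1 l2 l3 a b c) = LinearMap.det (Wop l1 l2 l3 a b c) := by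
  have e1 := congrArg LinearMap.det (key1 l1 l2 l3 a b c h1)
  rw [LinearMap.det_comp, LinearMap.det_comp, det_shearL bO (bO.prod bO),
    det_shearU bO (bO.prod bO), one_mul, mul_one,
    det_prodMap bO (bO.prod bO), LinearMap.det_smul, LinearMap.det_id, finrank_oct] at e1
  have e2 := congrArg LinearMap.det (key2 l1 l2 l3 a b c h1 hμ)
  rw [LinearMap.det_comp, LinearMap.det_comp, det_shearL bO bO,
    det_shearU bO bO, one_mul, mul_one,
    det_prodMap bO bO, LinearMap.det_smul, LinearMap.det_id, finrank_oct] at e2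
  have e3 := congrArg LinearMap.det (key3 l1 l2 l3 a b c h1 hμ)
  rw [LinearMap.det_smul, finrank_oct] at e3
  rw [e1, e2, ← e3]
  ring


def cyc : (Oct × Oct × Oct) ≃ₗ[ℂ] (Oct × Oct × Oct) where
  toFun p := (p.2.1, p.2.2, p.1)
  invFun p := (p.2.2, p.1, p.2.1)
  map_add' := by intros; rfl
  map_smul' := by intros; rfl
  left_inv := by intro p; rfl
  right_inv := by intro p; rfl

theorem MA_cyc (l1 l2 l3 : ℂ) (a b c : Oct) :
    (cyc.symm : (Oct × Oct × Oct) →ₗ[ℂ] (Oct × Oct × Oct)) ∘ₗ MA l1 l2 l3 a b c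
        ∘ₗ (cyc : (Oct × Oct × Oct) →ₗ[ℂ] (Oct × Oct × Oct)) = MA l3 l1 l2 c a b := by
  refine LinearMap.ext fun p => ?_
  obtain ⟨x, y, z⟩ := p
  simp only [MA, cyc, LinearMap.coe_comp, LinearMap.coe_mk, AddHom.coe_mk,
    Function.comp_apply, LinearEquiv.coe_coe, LinearEquiv.coe_symm_mk, LinearEquiv.coe_mk,
    Prod.mk.injEq]
  refine ⟨?_, ?_, ?_⟩ <;> abel

theorem det_MA_cyc (l1 l2 l3 : ℂ) (a b c : Oct) :
    LinearMap.det (MA l1 l2 l3 a b c) = LinearMap.det (MA l3 l1 l2 c a b) := by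
  rw [← MA_cyc l1 l2 l3 a b c]
  have := LinearMap.det_conj (MA l1 l2 l3 a b c) cyc.symm
  simpa using this.symm

section Cont

variable {V : Type*} [AddCommGroup V] [Module ℂ V]
variable {ι : Type*} [Fintype ι] [DecidableEq ι]

theorem cont_det_affine (v : Module.Basis ι ℂ V) (f g : V →ₗ[ℂ] V) :
    Continuous fun t : ℂ => LinearMap.det (f + t • g) := by
  have h : (fun t : ℂ => LinearMap.det (f + t • g)) =
      fun t : ℂ => Matrix.det (LinearMap.toMatrix v v f + t • LinearMap.toMatrix v v g) := by
    funext t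
    rw [← LinearMap.det_toMatrix v, map_add, map_smul]
  rw [h]
  exact (continuous_const.add (continuous_id.smul continuous_const)).matrix_det

end Cont

def Pi1 : (Oct × Oct × Oct) →ₗ[ℂ] (Oct × Oct × Oct) :=
  (LinearMap.fst ℂ Oct (Oct × Oct)).prod 0

def Pi2 : (Oct × Oct × Oct) →ₗ[ℂ] (Oct × Oct × Oct) :=
  (0 : (Oct × Oct × Oct) →ₗ[ℂ] Oct).prod
    (((LinearMap.fst ℂ Oct Oct).comp (LinearMap.snd ℂ Oct (Oct × Oct))).prod 0)

theorem MA_affine1 (t l2 l3 : ℂ) (a b c : Oct) :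
    MA t l2 l3 a b c = MA 0 l2 l3 a b c + t • Pi1 := by
  refine LinearMap.ext fun p => ?_
  obtain ⟨x, y, z⟩ := p
  simp only [MA, Pi1, LinearMap.add_apply, LinearMap.smul_apply, LinearMap.prod_apply, Function.prod,
    LinearMap.coe_mk, AddHom.coe_mk, LinearMap.fst_apply, LinearMap.zero_apply, Prod.mk_add_mk,
    Prod.smul_mk, Prod.mk.injEq, smul_zero, zero_smul, zero_add, add_zero, and_true, true_and]
  repeat' apply And.intro
  all_goals module

theorem MA_affine2 (l1 t l3 : ℂ) (a b c : Oct) :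
    MA l1 t l3 a b c = MA l1 0 l3 a b c + t • Pi2 := by
  refine LinearMap.ext fun p => ?_
  obtain ⟨x, y, z⟩ := p
  simp only [MA, Pi2, LinearMap.add_apply, LinearMap.smul_apply, LinearMap.prod_apply, Function.prod,
    LinearMap.coe_mk, AddHom.coe_mk, LinearMap.fst_apply, LinearMap.snd_apply,
    LinearMap.coe_comp, Function.comp_apply, LinearMap.zero_apply, Prod.mk_add_mk,
    Prod.smul_mk, Prod.mk.injEq, smul_zero, zero_smul, zero_add, add_zero, and_true, true_and]
  repeat' apply And.intro
  all_goals module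

theorem Wop_affine1 (t l2 l3 : ℂ) (a b c : Oct) :
    Wop t l2 l3 a b c = Wop 0 l2 l3 a b c
      + t • ((l2 * l3 - onormSq a) • (LinearMap.id : Oct →ₗ[ℂ] Oct)) := by
  refine LinearMap.ext fun x => ?_
  simp only [Wop, LinearMap.add_apply, LinearMap.smul_apply, LinearMap.id_coe, id_eq]
  match_scalars <;> ring

theorem Wop_affine2 (l1 t l3 : ℂ) (a b c : Oct) :
    Wop l1 t l3 a b c = Wop l1 0 l3 a b c
      + t • ((l1 * l3 - onormSq b) • (LinearMap.id : Oct →ₗ[ℂ] Oct)) := by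
  refine LinearMap.ext fun x => ?_
  simp only [Wop, LinearMap.add_apply, LinearMap.smul_apply, LinearMap.id_coe, id_eq]
  match_scalars <;> ring

theorem det_MA_step1 (l1 l2 l3 : ℂ) (a b c : Oct) (h2 : l2 ≠ 0) :
    LinearMap.det (MA l1 l2 l3 a b c) = LinearMap.det (Wop l1 l2 l3 a b c) := by
  have hd : Dense (({0, onormSq c * l2⁻¹} : Set ℂ)ᶜ) :=
    Set.Countable.dense_compl ℂ (((Set.finite_singleton _).insert _).countable)
  have hf : Continuous fun t : ℂ => LinearMap.det (MA t l2 l3 a b c) := by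
    have h : (fun t : ℂ => LinearMap.det (MA t l2 l3 a b c)) =
        fun t : ℂ => LinearMap.det (MA 0 l2 l3 a b c + t • Pi1) := by
      funext t; rw [← MA_affine1]
    rw [h]; exact cont_det_affine (bO.prod (bO.prod bO)) _ _
  have hg : Continuous fun t : ℂ => LinearMap.det (Wop t l2 l3 a b c) := by
    have h : (fun t : ℂ => LinearMap.det (Wop t l2 l3 a b c)) =
        fun t : ℂ => LinearMap.det (Wop 0 l2 l3 a b c
          + t • ((l2 * l3 - onormSq a) • (LinearMap.id : Oct →ₗ[ℂ] Oct))) := by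
      funext t; rw [← Wop_affine1]
    rw [h]; exact cont_det_affine bO _ _
  have heq : Set.EqOn (fun t : ℂ => LinearMap.det (MA t l2 l3 a b c))
      (fun t : ℂ => LinearMap.det (Wop t l2 l3 a b c)) (({0, onormSq c * l2⁻¹} : Set ℂ)ᶜ) := by
    intro t ht
    simp only [Set.mem_compl_iff, Set.mem_insert_iff, Set.mem_singleton_iff, not_or] at ht
    obtain ⟨ht0, htc⟩ := ht
    refine det_MA_core t l2 l3 a b c ht0 ?_
    intro h
    apply htc
    have : t * l2 = onormSq c := by
      have := sub_eq_zero.mp h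
      field_simp at this ⊢
      linear_combination this
    field_simp
    linear_combination this
  have := Continuous.ext_on hd hf hg heq
  exact congrFun this l1

theorem det_MA_Wop (l1 l2 l3 : ℂ) (a b c : Oct) :
    LinearMap.det (MA l1 l2 l3 a b c) = LinearMap.det (Wop l1 l2 l3 a b c) := by
  have hd : Dense (({0} : Set ℂ)ᶜ) :=
    Set.Countable.dense_compl ℂ (Set.countable_singleton _)
  have hf : Continuous fun t : ℂ => LinearMap.det (MA l1 t l3 a b c) := by
    have h : (fun t : ℂ => LinearMap.det (MA l1 t l3 a b c)) =
        fun t : ℂ => LinearMap.det (MA l1 0 l3 a b c + t • Pi2) := by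
      funext t; rw [← MA_affine2]
    rw [h]; exact cont_det_affine (bO.prod (bO.prod bO)) _ _
  have hg : Continuous fun t : ℂ => LinearMap.det (Wop l1 t l3 a b c) := by
    have h : (fun t : ℂ => LinearMap.det (Wop l1 t l3 a b c)) =
        fun t : ℂ => LinearMap.det (Wop l1 0 l3 a b c
          + t • ((l1 * l3 - onormSq b) • (LinearMap.id : Oct →ₗ[ℂ] Oct))) := by
      funext t; rw [← Wop_affine2]
    rw [h]; exact cont_det_affine bO _ _
  have heq : Set.EqOn (fun t : ℂ => LinearMap.det (MA l1 t l3 a b c))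
      (fun t : ℂ => LinearMap.det (Wop l1 t l3 a b c)) (({0} : Set ℂ)ᶜ) := by
    intro t ht
    simp only [Set.mem_compl_iff, Set.mem_singleton_iff] at ht
    exact det_MA_step1 l1 t l3 a b c ht
  have := Continuous.ext_on hd hf hg heq
  exact congrFun this l2

end Oct

namespace Oct

/-- For every `A = (λ₁, λ₂, λ₃, a, b, c) ∈ J₃(𝕆)`, the determinant of `M_A` (on the
24-dimensional space `𝕆³`) equals the determinant (on the 8-dimensional space `𝕆`) of the
endomorphism `(det_𝕆(A) − 2·Re(c·(a·b)))·id + L_a∘L_b∘L_c + L_c̄∘L_b̄∘L_ā`. -/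
theorem det_MA_eq_det_eight_dim (l1 l2 l3 : ℂ) (a b c : Oct) :
    LinearMap.det (MA l1 l2 l3 a b c) =
      LinearMap.det
        ((detO l1 l2 l3 a b c - 2 * oRe (omul c (omul a b))) • (LinearMap.id : Oct →ₗ[ℂ] Oct)
          + Lmul a ∘ₗ Lmul b ∘ₗ Lmul c
          + Lmul (oconj c) ∘ₗ Lmul (oconj b) ∘ₗ Lmul (oconj a)) := by
  have hW : Wop l3 l1 l2 c a b =
      (detO l1 l2 l3 a b c - 2 * oRe (omul c (omul a b))) • (LinearMap.id : Oct →ₗ[ℂ] Oct)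
        + Lmul a ∘ₗ Lmul b ∘ₗ Lmul c
        + Lmul (oconj c) ∘ₗ Lmul (oconj b) ∘ₗ Lmul (oconj a) := by
    refine LinearMap.ext fun x => ?_
    simp only [Wop, detO, Lmul, LinearMap.coe_comp, LinearMap.coe_mk, AddHom.coe_mk,
      Function.comp_apply, LinearMap.add_apply, LinearMap.smul_apply, LinearMap.id_coe, id_eq]
    match_scalars <;> ring
  rw [det_MA_cyc l1 l2 l3 a b c, det_MA_Wop l3 l1 l2 c a b, hW]


end Oct
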